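/- For every j ∈ ℕ, ∫₀^∞ r^6 (1+r²)^{−5} (1 − 2/(1+r²)) P_j^{(5/2,5/2)}(1 − 2/(1+r²)) dr = Γ(3/2) Γ(7/2 + j) (j² + 6j + 2) / (2 Γ(6 + j)). -/

import Mathlib

open MeasureTheory

/-- The Jacobi polynomial `P_j^{(σ,σ)}`, via the Rodrigues formula. -/
noncomputable def jacobiP (σ : ℝ) (j : ℕ) (x : ℝ) : ℝ :=
  ((-1 : ℝ) ^ j / (2 ^ j * (Nat.factorial j : ℝ))) * (1 - x ^ 2) ^ (-σ) *
    iteratedDeriv j (fun t : ℝ => (1 - t ^ 2) ^ (σ + (j : ℝ))) x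

open Real Set Filter Polynomial


noncomputable def pp (a : ℝ) : ℕ → Polynomial ℝ
  | 0 => 1
  | (k+1) => Polynomial.C (-2*(a-k)) * Polynomial.X * pp a k
      + (1 - Polynomial.X^2) * Polynomial.derivative (pp a k)

/-- `vv a k x` is the k-th derivative of `(1-x²)^a` on `(-1,1)`. -/
noncomputable def vv (a : ℝ) (k : ℕ) (x : ℝ) : ℝ := (1-x^2)^(a-k) * (pp a k).eval x

noncomputable def ff (m : ℕ) (x : ℝ) : ℝ :=
  (Nat.factorial (m+1) : ℝ) * (1-x)^(-(m+2) : ℝ) - (Nat.factorial m : ℝ) * (1-x)^(-(m+1) : ℝ)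

lemma vv_hasDerivAt (a : ℝ) (k : ℕ) {x : ℝ} (hx : x ∈ Set.Ioo (-1:ℝ) 1) :
    HasDerivAt (vv a k) (vv a (k+1) x) x := by
  have h1 : (0:ℝ) < 1 - x^2 := by nlinarith [hx.1, hx.2]
  have hbase : HasDerivAt (fun x : ℝ => 1 - x^2) (-(2*x)) x := by
    simpa using ((hasDerivAt_pow 2 x).const_sub 1)
  have h2 : HasDerivAt (fun x : ℝ => (1-x^2)^(a-k)) (-(2*x) * (a-k) * (1-x^2)^(a-k-1)) x :=
    hbase.rpow_const (Or.inl h1.ne')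
  have h3 : HasDerivAt (fun x : ℝ => (pp a k).eval x) ((Polynomial.derivative (pp a k)).eval x) x :=
    Polynomial.hasDerivAt _ x
  have h4 := h2.mul h3
  have key : (1-x^2)^(a-k) = (1-x^2)^(a-k-1) * (1-x^2) := by
    rw [show a - (k:ℝ) = (a-k-1)+1 by ring, Real.rpow_add h1, Real.rpow_one]
    ring_nf
  refine h4.congr_deriv ?_
  simp only [vv, pp, Polynomial.eval_add, Polynomial.eval_mul, Polynomial.eval_C,
    Polynomial.eval_X, Polynomial.eval_sub, Polynomial.eval_one, Polynomial.eval_pow]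
  have : a - (k+1 : ℕ) = a - k - 1 := by push_cast; ring
  rw [this, key]
  ring

lemma iteratedDeriv_eq_vv (a : ℝ) (k : ℕ) {x : ℝ} (hx : x ∈ Set.Ioo (-1:ℝ) 1) :
    iteratedDeriv k (fun t : ℝ => (1 - t^2)^a) x = vv a k x := by
  induction k generalizing x with
  | zero => simp [vv, pp]
  | succ k ih =>
    rw [iteratedDeriv_succ]
    have hev : (fun t => iteratedDeriv k (fun t : ℝ => (1 - t^2)^a) t) =ᶠ[nhds x] vv a k := by
      filter_upwards [isOpen_Ioo.mem_nhds hx] with y hy using ih hy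
    rw [hev.deriv_eq, (vv_hasDerivAt a k hx).deriv]

lemma ff_hasDerivAt (m : ℕ) {x : ℝ} (hx : x < 1) :
    HasDerivAt (ff m) (ff (m+1) x) x := by
  have h1 : (0:ℝ) < 1 - x := by linarith
  have hbase : HasDerivAt (fun x : ℝ => 1 - x) (-1) x := by
    simpa using (hasDerivAt_id x).const_sub 1
  have h2 : HasDerivAt (fun x : ℝ => (1-x)^(-(m+2):ℝ))
      (-1 * (-(m+2):ℝ) * (1-x)^((-(m+2):ℝ)-1)) x := hbase.rpow_const (Or.inl h1.ne')
  have h3 : HasDerivAt (fun x : ℝ => (1-x)^(-(m+1):ℝ))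
      (-1 * (-(m+1):ℝ) * (1-x)^((-(m+1):ℝ)-1)) x := hbase.rpow_const (Or.inl h1.ne')
  have h4 := (h2.const_mul (Nat.factorial (m+1) : ℝ)).sub (h3.const_mul (Nat.factorial m : ℝ))
  refine h4.congr_deriv ?_
  have e1 : (-(m+2):ℝ) - 1 = -((m+1)+2 : ℕ) := by push_cast; ring
  have e2 : (-(m+1):ℝ) - 1 = -((m+1)+1 : ℕ) := by push_cast; ring
  simp only [ff, e1, e2]
  push_cast [Nat.factorial_succ]
  ring
noncomputable def gg (c b : ℝ) (m : ℕ) (P : Polynomial ℝ) (x : ℝ) : ℝ :=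
  (1-x)^c * (1+x)^b * ((Nat.factorial (m+1) : ℝ) - (Nat.factorial m : ℝ) * (1-x)) * P.eval x

lemma gg_cont {c b : ℝ} (hc : 0 ≤ c) (hb : 0 ≤ b) (m : ℕ) (P : Polynomial ℝ) :
    Continuous (gg c b m P) := by
  apply Continuous.mul
  apply Continuous.mul
  apply Continuous.mul
  · exact (continuous_const.sub continuous_id).rpow_const (fun x => Or.inr hc)
  · exact (continuous_const.add continuous_id).rpow_const (fun x => Or.inr hb)
  · exact continuous_const.sub (continuous_const.mul (continuous_const.sub continuous_id))
  · exact P.continuous_aeval -- maybe wrong name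

lemma gg_one {c b : ℝ} (hc : c ≠ 0) (m : ℕ) (P : Polynomial ℝ) : gg c b m P 1 = 0 := by
  simp [gg, Real.zero_rpow hc]

lemma gg_negone {c b : ℝ} (hb : b ≠ 0) (m : ℕ) (P : Polynomial ℝ) : gg c b m P (-1) = 0 := by
  simp [gg, Real.zero_rpow hb]

lemma ff_mul_vv (a : ℝ) (m k : ℕ) {x : ℝ} (hx : x ∈ Set.Ioo (-1:ℝ) 1) :
    ff m x * vv a k x = gg (a - k - (m+2)) (a-k) m (pp a k) x := by
  have h1 : (0:ℝ) < 1 - x := by linarith [hx.2]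
  have h2 : (0:ℝ) < 1 + x := by linarith [hx.1]
  have e0 : ((1:ℝ) - x^2) ^ (a-(k:ℝ)) = (1-x)^(a-(k:ℝ)) * (1+x)^(a-(k:ℝ)) := by
    rw [show (1:ℝ) - x^2 = (1-x)*(1+x) by ring, Real.mul_rpow h1.le h2.le]
  have hffm : ff m x = ((Nat.factorial (m+1) : ℝ) - (Nat.factorial m : ℝ) * (1-x))
      * (1-x)^(-(m+2):ℝ) := by
    rw [ff, show (-(m+1):ℝ) = (-(m+2):ℝ) + 1 by ring, Real.rpow_add h1, Real.rpow_one]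
    ring
  have e2 : ((1:ℝ)-x)^(-(m+2):ℝ) * (1-x)^(a-(k:ℝ)) = (1-x)^(a - k - (m+2)) := by
    rw [← Real.rpow_add h1]; ring_nf
  rw [hffm, vv, e0, gg, ← e2]
  ring

lemma vv_integrableOn (a : ℝ) (m k : ℕ) (hc : 0 ≤ a - k - (m+2)) (hb : 0 ≤ a - k) :
    IntegrableOn (fun x => ff m x * vv a k x) (Set.Ioo (-1:ℝ) 1) := by
  refine (((gg_cont hc hb m (pp a k)).integrableOn_Icc (a := -1) (b := 1)).mono_set
    Set.Ioo_subset_Icc_self).congr_fun (fun x hx => (ff_mul_vv a m k hx).symm) measurableSet_Ioo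

lemma tends_aux (a : ℝ) (m k : ℕ) (hc : 0 < a - k - (m+2)) (hb : 0 < a - k) :
    Tendsto (fun x => ff m x * vv a k x) (nhdsWithin (-1:ℝ) (Set.Ioi (-1))) (nhds 0)
    ∧ Tendsto (fun x => ff m x * vv a k x) (nhdsWithin (1:ℝ) (Set.Iio 1)) (nhds 0) := by
  have hcont := (gg_cont hc.le hb.le m (pp a k)).continuousAt (x := (-1:ℝ))
  constructor
  · have h1 : Tendsto (gg (a - k - (m+2)) (a-k) m (pp a k)) (nhdsWithin (-1:ℝ) (Set.Ioi (-1)))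
        (nhds 0) := by
      have := ((gg_cont hc.le hb.le m (pp a k)).tendsto (-1)).mono_left
        (nhdsWithin_le_nhds (s := Set.Ioi (-1:ℝ)))
      rwa [gg_negone hb.ne'] at this
    refine h1.congr' ?_
    filter_upwards [Ioo_mem_nhdsGT_of_mem (by norm_num : (-1:ℝ) ∈ Set.Ico (-1:ℝ) 1)] with x hx
    exact (ff_mul_vv a m k hx).symm
  · have h1 : Tendsto (gg (a - k - (m+2)) (a-k) m (pp a k)) (nhdsWithin (1:ℝ) (Set.Iio 1))
        (nhds 0) := by
      have := ((gg_cont hc.le hb.le m (pp a k)).tendsto 1).mono_left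
        (nhdsWithin_le_nhds (s := Set.Iio (1:ℝ)))
      rwa [gg_one hc.ne'] at this
    refine h1.congr' ?_
    filter_upwards [Ioo_mem_nhdsLT_of_mem (by norm_num : (1:ℝ) ∈ Set.Ioc (-1:ℝ) 1)] with x hx
    exact (ff_mul_vv a m k hx).symm

lemma ibp (a : ℝ) (m k : ℕ) (hmk : (m:ℝ) + (k:ℝ) + 7/2 = a) :
    (∫ x in Set.Ioo (-1:ℝ) 1, ff (m+1) x * vv a k x)
      = - ∫ x in Set.Ioo (-1:ℝ) 1, ff m x * vv a (k+1) x := by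
  have hI1 := vv_integrableOn a (m+1) k (by push_cast; linarith) (by push_cast; linarith)
  have hI2 := vv_integrableOn a m (k+1) (by push_cast; linarith) (by push_cast; linarith)
  have hT := tends_aux a m k (by push_cast; linarith) (by push_cast; linarith)
  have hder : ∀ x ∈ Set.Ioo (-1:ℝ) 1, HasDerivAt (fun x => ff m x * vv a k x)
      (ff (m+1) x * vv a k x + ff m x * vv a (k+1) x) x :=
    fun x hx => (ff_hasDerivAt m hx.2).mul (vv_hasDerivAt a k hx)
  have hint : IntervalIntegrable (fun x => ff (m+1) x * vv a k x + ff m x * vv a (k+1) x)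
      volume (-1) 1 := by
    rw [intervalIntegrable_iff_integrableOn_Ioo_of_le (by norm_num)]
    exact hI1.add hI2
  have key := intervalIntegral.integral_eq_sub_of_hasDerivAt_of_tendsto
    (by norm_num : (-1:ℝ) < 1) hder hint hT.1 hT.2
  rw [intervalIntegral.integral_of_le (by norm_num : (-1:ℝ) ≤ 1),
    integral_Ioc_eq_integral_Ioo, integral_add hI1 hI2] at key
  linarith [key]

lemma chain (j : ℕ) : ∀ k, k ≤ j →
    (∫ x in Set.Ioo (-1:ℝ) 1, ff (j-k) x * vv (5/2 + j) k x)
      = (-1:ℝ)^k * ∫ x in Set.Ioo (-1:ℝ) 1, ff j x * vv (5/2 + j) 0 x := by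
  intro k
  induction k with
  | zero => simp
  | succ k ih =>
    intro hk
    have hk' : k ≤ j := by omega
    have hmk : ((j-(k+1) : ℕ) : ℝ) + (k:ℝ) + 7/2 = 5/2 + j := by
      rw [Nat.cast_sub (by omega : k+1 ≤ j)]
      push_cast; ring
    have hibp := ibp (5/2 + j) (j-(k+1)) k hmk
    rw [show j - (k+1) + 1 = j - k by omega] at hibp
    rw [ih hk'] at hibp
    have : (∫ x in Set.Ioo (-1:ℝ) 1, ff (j-(k+1)) x * vv (5/2 + j) (k+1) x)
        = - ((-1:ℝ)^k * ∫ x in Set.Ioo (-1:ℝ) 1, ff j x * vv (5/2 + j) 0 x) := by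
      linarith [hibp]
    rw [this]; ring

lemma realBeta {u v : ℝ} (hu : 0 < u) (hv : 0 < v) :
    ∫ t in (0:ℝ)..1, t^(u-1) * (1-t)^(v-1)
      = Real.Gamma u * Real.Gamma v / Real.Gamma (u+v) := by
  have hc := Complex.Gamma_mul_Gamma_eq_betaIntegral (s := (u:ℂ)) (t := (v:ℂ))
    (by simpa using hu) (by simpa using hv)
  have hbeta : Complex.betaIntegral (u:ℂ) (v:ℂ)
      = ((∫ t in (0:ℝ)..1, t^(u-1) * (1-t)^(v-1) : ℝ) : ℂ) := by
    rw [Complex.betaIntegral, ← intervalIntegral.integral_ofReal]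
    apply intervalIntegral.integral_congr
    intro x hx
    rw [Set.uIcc_of_le (by norm_num : (0:ℝ) ≤ 1)] at hx
    dsimp only
    rw [Complex.ofReal_mul, show ((u:ℂ) - 1) = ((u-1:ℝ):ℂ) by push_cast; ring,
      show ((v:ℂ) - 1) = ((v-1:ℝ):ℂ) by push_cast; ring,
      show ((1:ℂ) - (x:ℂ)) = ((1-x:ℝ):ℂ) by push_cast; ring,
      ← Complex.ofReal_cpow hx.1 (u-1),
      ← Complex.ofReal_cpow (by linarith [hx.2] : (0:ℝ) ≤ 1 - x) (v-1)]
  rw [hbeta, show ((u:ℂ) + (v:ℂ)) = ((u+v:ℝ):ℂ) by push_cast; ring,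
    Complex.Gamma_ofReal, Complex.Gamma_ofReal, Complex.Gamma_ofReal,
    ← Complex.ofReal_mul, ← Complex.ofReal_mul, Complex.ofReal_inj] at hc
  have hne : Real.Gamma (u+v) ≠ 0 := (Real.Gamma_pos_of_pos (by linarith)).ne'
  field_simp
  linarith [hc]

lemma betaIoo {p q : ℝ} (hp : 0 < p) (hq : 0 < q) :
    ∫ x in Set.Ioo (-1:ℝ) 1, (1-x)^p * (1+x)^q
      = 2^(p+q+1) * (Real.Gamma (p+1) * Real.Gamma (q+1) / Real.Gamma (p+q+2)) := by
  have h0 : (∫ x in Set.Ioo (-1:ℝ) 1, (1-x)^p * (1+x)^q)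
      = ∫ x in (-1:ℝ)..1, (1-x)^p * (1+x)^q := by
    rw [intervalIntegral.integral_of_le (by norm_num : (-1:ℝ) ≤ 1), integral_Ioc_eq_integral_Ioo]
  have h1 := intervalIntegral.integral_comp_mul_add (a := (0:ℝ)) (b := 1) (c := 2)
    (f := fun x => (1-x)^p * (1+x)^q) two_ne_zero (-1)
  simp only [smul_eq_mul] at h1
  rw [show (2*(0:ℝ)+-1) = -1 by norm_num, show (2*(1:ℝ)+-1) = 1 by norm_num] at h1
  have h2 : (∫ x in (0:ℝ)..1, (1 - (2*x + -1))^p * (1 + (2*x + -1))^q)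
      = ∫ x in (0:ℝ)..1, 2^p * 2^q * (x^q * (1-x)^p) := by
    apply intervalIntegral.integral_congr
    intro x hx
    rw [Set.uIcc_of_le (by norm_num : (0:ℝ) ≤ 1)] at hx
    dsimp only
    rw [show (1:ℝ) - (2*x + -1) = 2 * (1-x) by ring, show (1:ℝ) + (2*x + -1) = 2 * x by ring,
      Real.mul_rpow (by norm_num) (by linarith [hx.2]), Real.mul_rpow (by norm_num) hx.1]
    ring
  have h3 : (∫ t in (0:ℝ)..1, t^((q+1)-1) * (1-t)^((p+1)-1))
      = Real.Gamma (q+1) * Real.Gamma (p+1) / Real.Gamma ((q+1)+(p+1)) :=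
    realBeta (by linarith) (by linarith)
  simp only [add_sub_cancel_right] at h3
  rw [h2, intervalIntegral.integral_const_mul, h3,
    show (q+1)+(p+1) = p + q + 2 by ring] at h1
  rw [h0, show (∫ x in (-1:ℝ)..1, (1-x)^p * (1+x)^q)
      = 2 * (2^p * 2^q * (Real.Gamma (q+1) * Real.Gamma (p+1) / Real.Gamma (p+q+2))) by
        linarith [h1]]
  rw [show p + q + 1 = p + q + (1:ℝ) by ring, Real.rpow_add (by norm_num : (0:ℝ) < 2),
    Real.rpow_add (by norm_num : (0:ℝ) < 2), Real.rpow_one]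
  ring

lemma J0val (j : ℕ) : (∫ x in Set.Ioo (-1:ℝ) 1, ff j x * vv (5/2 + j) 0 x)
    = (Nat.factorial (j+1) : ℝ) * (2^((1/2:ℝ)+(5/2+(j:ℝ))+1) *
        (Real.Gamma (1/2+1) * Real.Gamma ((5/2+(j:ℝ))+1) / Real.Gamma ((1/2)+(5/2+(j:ℝ))+2)))
      - (Nat.factorial j : ℝ) * (2^((3/2:ℝ)+(5/2+(j:ℝ))+1) *
        (Real.Gamma (3/2+1) * Real.Gamma ((5/2+(j:ℝ))+1) / Real.Gamma ((3/2)+(5/2+(j:ℝ))+2))) := by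
  set a : ℝ := 5/2 + (j:ℝ) with ha
  have hIa : IntegrableOn (fun x => (1-x)^((1/2):ℝ) * (1+x)^a) (Set.Ioo (-1:ℝ) 1) := by
    apply (Continuous.integrableOn_Icc (a := -1) (b := 1) ?_).mono_set Set.Ioo_subset_Icc_self
    exact (((continuous_const.sub continuous_id).rpow_const (fun x => Or.inr (by norm_num))).mul
      ((continuous_const.add continuous_id).rpow_const (fun x => Or.inr (by positivity))))
  have hIb : IntegrableOn (fun x => (1-x)^((3/2):ℝ) * (1+x)^a) (Set.Ioo (-1:ℝ) 1) := by
    apply (Continuous.integrableOn_Icc (a := -1) (b := 1) ?_).mono_set Set.Ioo_subset_Icc_self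
    exact (((continuous_const.sub continuous_id).rpow_const (fun x => Or.inr (by norm_num))).mul
      ((continuous_const.add continuous_id).rpow_const (fun x => Or.inr (by positivity))))
  have key : ∀ x ∈ Set.Ioo (-1:ℝ) 1, ff j x * vv a 0 x
      = (Nat.factorial (j+1) : ℝ) * ((1-x)^((1/2):ℝ) * (1+x)^a)
        - (Nat.factorial j : ℝ) * ((1-x)^((3/2):ℝ) * (1+x)^a) := by
    intro x hx
    have h1 : (0:ℝ) < 1 - x := by linarith [hx.2]
    rw [ff_mul_vv a j 0 hx]
    have e0 : a - (0:ℕ) - (j+2) = 1/2 := by push_cast; ring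
    have e1 : a - ((0:ℕ):ℝ) = a := by norm_num
    have e3 : ((1:ℝ)-x)^((3/2):ℝ) = (1-x)^((1/2):ℝ) * (1-x) := by
      rw [show ((3/2):ℝ) = 1/2 + 1 by norm_num, Real.rpow_add h1, Real.rpow_one]
    rw [gg, e0, e1, e3]
    simp [pp]
    ring
  rw [setIntegral_congr_fun measurableSet_Ioo key, integral_sub ((hIa.const_mul _))
    ((hIb.const_mul _)), MeasureTheory.integral_const_mul, MeasureTheory.integral_const_mul,
    betaIoo (by norm_num) (by positivity), betaIoo (by norm_num) (by positivity)]

lemma himg : (fun r : ℝ => 1 - 2/(1+r^2)) '' (Set.Ioi 0) = Set.Ioo (-1:ℝ) 1 := by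
  ext x
  constructor
  · rintro ⟨r, hr, rfl⟩
    have h1 : (0:ℝ) < 1 + r^2 := by positivity
    have h2 : 2/(1+r^2) < 2 := by
      rw [div_lt_iff₀ h1]; simp only [Set.mem_Ioi] at hr; nlinarith
    have h3 : 0 < 2/(1+r^2) := by positivity
    exact ⟨by linarith, by linarith⟩
  · intro hx
    have h1 : (0:ℝ) < 1 - x := by linarith [hx.2]
    have h2 : (0:ℝ) < 1 + x := by linarith [hx.1]
    refine ⟨Real.sqrt ((1+x)/(1-x)), Real.sqrt_pos.mpr (by positivity), ?_⟩
    have hsq : Real.sqrt ((1+x)/(1-x)) ^ 2 = (1+x)/(1-x) := Real.sq_sqrt (by positivity)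
    dsimp only
    rw [hsq]
    field_simp
    ring

lemma hinj : Set.InjOn (fun r : ℝ => 1 - 2/(1+r^2)) (Set.Ioi 0) := by
  intro r hr s hs heq
  simp only [Set.mem_Ioi] at hr hs
  have h1 : (0:ℝ) < 1 + r^2 := by positivity
  have h2 : (0:ℝ) < 1 + s^2 := by positivity
  have h3 : r^2 = s^2 := by
    field_simp at heq
    linarith
  nlinarith [sq_nonneg (r - s), sq_nonneg (r + s)]

lemma hderWithin (r : ℝ) :
    HasDerivWithinAt (fun r : ℝ => 1 - 2/(1+r^2)) (4*r/(1+r^2)^2) (Set.Ioi 0) r := by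
  have h1 : (0:ℝ) < 1 + r^2 := by positivity
  have hb : HasDerivAt (fun r : ℝ => 1 + r^2) (2*r) r := by
    simpa using (hasDerivAt_pow 2 r).const_add 1
  have hd := ((hasDerivAt_const r (2:ℝ)).div hb h1.ne').const_sub 1
  refine hd.hasDerivWithinAt.congr_deriv ?_
  field_simp
  ring

noncomputable def Psi (j : ℕ) (x : ℝ) : ℝ :=
  (1/32) * ((1-x)^((1:ℝ)/2) * (1+x)^((5:ℝ)/2) * x * jacobiP (5/2) j x)

lemma hpt (j : ℕ) : ∀ r ∈ Set.Ioi (0:ℝ), |4*r/(1+r^2)^2| • Psi j (1 - 2/(1+r^2))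
    = r^6 * (1+r^2)^(-5:ℝ) * (1 - 2/(1+r^2)) * jacobiP (5/2) j (1 - 2/(1+r^2)) := by
  intro r hr
  simp only [Set.mem_Ioi] at hr
  have hs : (0:ℝ) < 1 + r^2 := by positivity
  have habs : |4*r/(1+r^2)^2| = 4*r/(1+r^2)^2 := abs_of_pos (by positivity)
  have key1 : (1:ℝ) - (1 - 2/(1+r^2)) = 2/(1+r^2) := by ring
  have key2 : (1:ℝ) + (1 - 2/(1+r^2)) = 2*r^2/(1+r^2) := by field_simp; ring
  rw [habs, smul_eq_mul, Psi, key1, key2]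
  have e1 : ((2:ℝ)/(1+r^2))^((1:ℝ)/2) = 2^((1:ℝ)/2) * (1+r^2)^(-((1:ℝ)/2)) := by
    rw [Real.div_rpow (by norm_num) hs.le, Real.rpow_neg hs.le, div_eq_mul_inv]
  have e2 : ((2:ℝ)*r^2/(1+r^2))^((5:ℝ)/2)
      = 2^((5:ℝ)/2) * r^5 * (1+r^2)^(-((5:ℝ)/2)) := by
    have er : (r^2)^((5:ℝ)/2) = r^5 := by
      rw [← Real.rpow_natCast r 2, ← Real.rpow_mul hr.le,
        show ((2:ℕ):ℝ)*(5/2) = ((5:ℕ):ℝ) by norm_num, Real.rpow_natCast]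
    rw [Real.div_rpow (by positivity) hs.le, Real.rpow_neg hs.le,
      Real.mul_rpow (by norm_num) (by positivity), er, div_eq_mul_inv]
  rw [e1, e2]
  have e3 : (2:ℝ)^((1:ℝ)/2) * 2^((5:ℝ)/2) = 8 := by
    rw [← Real.rpow_add (by norm_num : (0:ℝ) < 2), show (1:ℝ)/2 + 5/2 = ((3:ℕ):ℝ) by norm_num,
      Real.rpow_natCast]
    norm_num
  have e4 : (1+r^2)^(-((1:ℝ)/2)) * (1+r^2)^(-((5:ℝ)/2)) * ((1+r^2)^2)⁻¹
      = (1+r^2)^(-5:ℝ) := by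
    rw [← Real.rpow_add hs, ← Real.rpow_natCast (1+r^2) 2, ← Real.rpow_neg hs.le,
      ← Real.rpow_add hs]
    norm_num
  rw [div_eq_mul_inv (4*r)]
  calc 4*r*((1+r^2)^2)⁻¹ * (1/32 * (2^((1:ℝ)/2) * (1+r^2)^(-((1:ℝ)/2)) *
        (2^((5:ℝ)/2) * r^5 * (1+r^2)^(-((5:ℝ)/2))) * (1 - 2/(1+r^2)) *
        jacobiP (5/2) j (1 - 2/(1+r^2))))
      = (2^((1:ℝ)/2) * 2^((5:ℝ)/2)) * (1/32) * (r*r^5) *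
        ((1+r^2)^(-((1:ℝ)/2)) * (1+r^2)^(-((5:ℝ)/2)) * ((1+r^2)^2)⁻¹) * 4 *
        ((1 - 2/(1+r^2)) * jacobiP (5/2) j (1 - 2/(1+r^2))) := by ring
    _ = r^6 * (1+r^2)^(-5:ℝ) * (1 - 2/(1+r^2)) * jacobiP (5/2) j (1 - 2/(1+r^2)) := by
        rw [e3, e4]; ring

lemma psi_eq (j : ℕ) : ∀ x ∈ Set.Ioo (-1:ℝ) 1,
    Psi j x = (1/32) * ((-1:ℝ)^j / (2^j * (Nat.factorial j : ℝ)))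
      * (ff 0 x * vv (5/2 + (j:ℝ)) j x) := by
  intro x hx
  have h1 : (0:ℝ) < 1 - x := by linarith [hx.2]
  have h2 : (0:ℝ) < 1 + x := by linarith [hx.1]
  have hff0 : ff 0 x = x * (1-x)^(-(2:ℝ)) := by
    rw [ff, show (-((0:ℕ)+1):ℝ) = (-((0:ℕ)+2):ℝ) + 1 by push_cast; ring,
      Real.rpow_add h1, Real.rpow_one]
    simp [Nat.factorial]
    ring
  rw [Psi, jacobiP, iteratedDeriv_eq_vv (5/2 + (j:ℝ)) j hx, hff0]
  have e0 : ((1:ℝ)-x^2)^(-(5/2):ℝ) = (1-x)^(-(5/2):ℝ) * (1+x)^(-(5/2):ℝ) := by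
    rw [show (1:ℝ) - x^2 = (1-x)*(1+x) by ring, Real.mul_rpow h1.le h2.le]
  have e1 : ((1:ℝ)-x)^((1:ℝ)/2) * (1-x)^(-(5/2):ℝ) = (1-x)^(-(2:ℝ)) := by
    rw [← Real.rpow_add h1]; norm_num
  have e2 : ((1:ℝ)+x)^((5:ℝ)/2) * (1+x)^(-(5/2):ℝ) = 1 := by
    rw [← Real.rpow_add h2]; norm_num
  calc (1:ℝ)/32 * ((1-x)^((1:ℝ)/2) * (1+x)^((5:ℝ)/2) * x *
        ((-1:ℝ)^j / (2^j * (Nat.factorial j : ℝ)) * (1-x^2)^(-(5/2):ℝ) * vv (5/2 + (j:ℝ)) j x))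
      = (1/32) * ((-1:ℝ)^j / (2^j * (Nat.factorial j : ℝ))) * (x *
          (((1-x)^((1:ℝ)/2) * (1-x)^(-(5/2):ℝ)) * ((1+x)^((5:ℝ)/2) * (1+x)^(-(5/2):ℝ)))
          * vv (5/2 + (j:ℝ)) j x) := by rw [e0]; ring
    _ = _ := by rw [e1, e2]; ring

theorem stmt14 (j : ℕ) :
    (∫ r in Set.Ioi (0 : ℝ),
        r ^ 6 * (1 + r ^ 2) ^ (-5 : ℝ) * (1 - 2 / (1 + r ^ 2)) *
          jacobiP (5 / 2) j (1 - 2 / (1 + r ^ 2)))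
      = Real.Gamma (3 / 2) * Real.Gamma (7 / 2 + j) * ((j : ℝ) ^ 2 + 6 * j + 2) /
          (2 * Real.Gamma (6 + j)) := by
  have hsub := integral_image_eq_integral_abs_deriv_smul (s := Set.Ioi (0:ℝ)) measurableSet_Ioi
    (f' := fun r => 4*r/(1+r^2)^2) (fun r _ => hderWithin r) hinj (Psi j)
  rw [himg] at hsub
  have h1 : (∫ r in Set.Ioi (0:ℝ),
        r ^ 6 * (1 + r ^ 2) ^ (-5 : ℝ) * (1 - 2 / (1 + r ^ 2)) *
          jacobiP (5 / 2) j (1 - 2 / (1 + r ^ 2)))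
      = ∫ x in Set.Ioo (-1:ℝ) 1, Psi j x := by
    rw [hsub]
    exact (setIntegral_congr_fun measurableSet_Ioi (fun r hr => hpt j r hr)).symm
  rw [h1, setIntegral_congr_fun measurableSet_Ioo (psi_eq j),
    MeasureTheory.integral_const_mul]
  have hch := chain j j le_rfl
  rw [Nat.sub_self] at hch
  rw [hch, J0val j]
  rw [show (1/2 + 1 : ℝ) = 3/2 by norm_num,
    show ((5/2 + (j:ℝ)) + 1) = 7/2 + j by ring,
    show (1/2 + (5/2 + (j:ℝ)) + 2) = ((j+4:ℕ):ℝ) + 1 by push_cast; ring,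
    show (3/2 + (5/2 + (j:ℝ)) + 2) = ((j+5:ℕ):ℝ) + 1 by push_cast; ring,
    Real.Gamma_nat_eq_factorial, Real.Gamma_nat_eq_factorial,
    Real.Gamma_add_one (by norm_num : (3/2:ℝ) ≠ 0),
    show (6 + (j:ℝ)) = ((j+5:ℕ):ℝ) + 1 by push_cast; ring, Real.Gamma_nat_eq_factorial,
    show (1/2 + (5/2 + (j:ℝ)) + 1) = ((j+4:ℕ):ℝ) by push_cast; ring,
    show (3/2 + (5/2 + (j:ℝ)) + 1) = ((j+5:ℕ):ℝ) by push_cast; ring,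
    Real.rpow_natCast, Real.rpow_natCast]
  have hsign : (-1:ℝ)^j * (-1:ℝ)^j = 1 := by
    rw [← pow_add]
    exact Even.neg_one_pow ⟨j, rfl⟩
  have hf1 : (Nat.factorial (j+1) : ℝ) = (j+1) * Nat.factorial j := by
    rw [Nat.factorial_succ]; push_cast; ring
  have hf5 : (Nat.factorial (j+5) : ℝ) = (j+5) * Nat.factorial (j+4) := by
    rw [show j+5 = (j+4)+1 from rfl, Nat.factorial_succ]; push_cast; ring
  have hp4 : (2:ℝ)^(j+4) = 2^j * 16 := by rw [pow_add]; norm_num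
  have hp5 : (2:ℝ)^(j+5) = 2^j * 32 := by rw [pow_add]; norm_num
  rw [hf1, hf5, hp4, hp5]
  have hfj : (Nat.factorial j : ℝ) ≠ 0 := Nat.cast_ne_zero.mpr (Nat.factorial_ne_zero j)
  have hfj4 : (Nat.factorial (j+4) : ℝ) ≠ 0 := Nat.cast_ne_zero.mpr (Nat.factorial_ne_zero _)
  have h2j : (2:ℝ)^j ≠ 0 := by positivity
  have hj5 : ((j:ℝ)+5) ≠ 0 := by positivity
  field_simp
  ring_nf
  rw [show j*2 = 2*j by ring, pow_mul]
  norm_num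
  ring
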